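/- Let (φ, y, ρ, H) be a solution of the flat FLRW system on I = [t₀, T) (T ≤ ∞) satisfying the Friedmann constraint at every t ∈ I, with ρ(t) ≥ 0 on I. Suppose that φ(t) → +∞ as t → T⁻ and that V(ψ) → 0 as ψ → +∞. Then the (possibly infinite) limit H_∞ = lim_{t→T⁻} H(t) exists and satisfies H_∞ ≤ 0. -/

import Mathlib

open Real Set Filter

/-- A solution of the flat FLRW system on the set `I`:
`φ' = y`, `y' = -3Hy - V'(φ) + α(φ)ρ`, `ρ' = -ρ(3γH + α(φ)y)`, `H' = -(1/2)(y² + γρ)`. -/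
def IsFLRWSolution (γ : ℝ) (α V : ℝ → ℝ) (I : Set ℝ) (φ y ρ H : ℝ → ℝ) : Prop :=
  ∀ t ∈ I,
    HasDerivWithinAt φ (y t) I t ∧
    HasDerivWithinAt y (-3 * H t * y t - deriv V (φ t) + α (φ t) * ρ t) I t ∧
    HasDerivWithinAt ρ (-(ρ t) * (3 * γ * H t + α (φ t) * y t)) I t ∧
    HasDerivWithinAt H (-(1/2) * (y t ^ 2 + γ * ρ t)) I t

/-- The Friedmann constraint `3H² = (1/2)y² + V(φ) + ρ` at time `t`. -/
def FriedmannConstraint (V : ℝ → ℝ) (φ y ρ H : ℝ → ℝ) (t : ℝ) : Prop :=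
  3 * H t ^ 2 = (1/2) * y t ^ 2 + V (φ t) + ρ t

/-- The interval `[t₀, T)` with possibly infinite right endpoint `T : EReal`. -/
def IcoE (t₀ : ℝ) (T : EReal) : Set ℝ := {t : ℝ | t₀ ≤ t ∧ (t : EReal) < T}

/-- The filter of real times `t → T⁻` (this is `𝓝[<] T` for finite `T`, and `atTop`
for `T = ⊤`). -/
noncomputable def leftLimFilter (T : EReal) : Filter ℝ :=
  Filter.comap (fun t : ℝ => (t : EReal)) (nhdsWithin T (Set.Iio T))

/-- The solution `(φ, y, ρ, H)` on `[t₀, T)` extends to a solution of the same system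
on the set `J`. -/
def ExtendsSol (γ : ℝ) (α V : ℝ → ℝ) (t₀ : ℝ) (T : EReal)
    (φ y ρ H : ℝ → ℝ) (J : Set ℝ) : Prop :=
  ∃ φ' y' ρ' H' : ℝ → ℝ,
    IsFLRWSolution γ α V J φ' y' ρ' H' ∧
    Set.EqOn φ φ' (IcoE t₀ T) ∧ Set.EqOn y y' (IcoE t₀ T) ∧
    Set.EqOn ρ ρ' (IcoE t₀ T) ∧ Set.EqOn H H' (IcoE t₀ T)

/-- A solution on `[t₀, T)` is right-maximal if it can be extended neither to a solution
on `[t₀, T]` (when `T` is finite) nor to a solution on `[t₀, T')` for some `T' > T`. -/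
def RightMaximal (γ : ℝ) (α V : ℝ → ℝ) (t₀ : ℝ) (T : EReal)
    (φ y ρ H : ℝ → ℝ) : Prop :=
  ¬ ((T ≠ ⊤ ∧ ExtendsSol γ α V t₀ T φ y ρ H (Set.Icc t₀ T.toReal)) ∨
     (∃ T' : EReal, T < T' ∧ ExtendsSol γ α V t₀ T φ y ρ H (IcoE t₀ T')))

open scoped Topology

/-- if `φ(t) → +∞` as `t → T⁻` and `V(ψ) → 0` as `ψ → +∞`, then the
(possibly infinite) limit `H_∞` of the Hubble function as `t → T⁻` exists and is `≤ 0`. -/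
lemma flrw_antitoneOn (γ : ℝ) (α V : ℝ → ℝ) {S : Set ℝ} (hS : Convex ℝ S)
    {φ y ρ H : ℝ → ℝ}
    (hsol : IsFLRWSolution γ α V S φ y ρ H)
    (hρ : ∀ t ∈ S, 0 ≤ ρ t) (hγ : 0 < γ) : AntitoneOn H S := by
  apply antitoneOn_of_hasDerivWithinAt_nonpos hS
    (f' := fun t => -(1/2) * (y t ^ 2 + γ * ρ t))
    (fun t ht => ((hsol t ht).2.2.2).continuousWithinAt)
    (fun t ht => ((hsol t (interior_subset ht)).2.2.2).mono interior_subset)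
  intro t ht
  have h1 := hρ t (interior_subset ht)
  nlinarith [sq_nonneg (y t)]

lemma flrw_core (γ : ℝ) (hγ : 0 < γ) (α V : ℝ → ℝ) (S : Set ℝ) (hS : Convex ℝ S)
    (L : Filter ℝ) [hL : L.NeBot]
    (φ y ρ H : ℝ → ℝ)
    (hsol : IsFLRWSolution γ α V S φ y ρ H)
    (hcon : ∀ t ∈ S, FriedmannConstraint V φ y ρ H t)
    (hρ : ∀ t ∈ S, 0 ≤ ρ t)
    (hφ : Tendsto φ L atTop)
    (hVφ : Tendsto (fun t => V (φ t)) L (nhds 0))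
    (h : ℝ) (hh : 0 < h)
    (hHlim : Tendsto (fun t => (H t : EReal)) L (nhds (h : EReal)))
    (hLtail : ∀ s ∈ S, ∀ᶠ t in L, t ∈ S ∧ s ≤ t)
    (hextract : ∀ p : ℝ → Prop, (∀ᶠ t in L, p t) → ∃ t₁ ∈ S, ∀ t ∈ S, t₁ ≤ t → p t) :
    False := by
  have hanti : AntitoneOn H S := flrw_antitoneOn γ α V hS hsol hρ hγ
  have hHge : ∀ t ∈ S, h ≤ H t := by
    intro t ht
    have hev : ∀ᶠ s in L, (H s : EReal) ≤ (H t : EReal) :=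
      (hLtail t ht).mono fun s hs => EReal.coe_le_coe_iff.2 (hanti ht hs.1 hs.2)
    exact EReal.coe_le_coe_iff.1 (le_of_tendsto hHlim hev)
  have hVmem : {t | V (φ t) ∈ Ioo (-(h^2/2)) (h^2/2)} ∈ L :=
    hVφ (Ioo_mem_nhds (by nlinarith) (by nlinarith))
  obtain ⟨t₁, ht₁, hp⟩ := hextract _ hVmem
  set S₁ : Set ℝ := S ∩ Ici t₁ with hS₁def
  have hS₁ : Convex ℝ S₁ := hS.inter (convex_Ici t₁)
  have ht₁S₁ : t₁ ∈ S₁ := ⟨ht₁, le_refl t₁⟩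
  have hsub : S₁ ⊆ S := inter_subset_left
  have hVsmall : ∀ t ∈ S₁, -(h^2/2) < V (φ t) ∧ V (φ t) < h^2/2 := fun t ht => hp t ht.1 ht.2
  set M : ℝ := Real.sqrt (6 * H t₁ ^ 2 + h ^ 2) with hMdef
  have hM0 : 0 ≤ M := Real.sqrt_nonneg _
  have hMsq : M ^ 2 = 6 * H t₁ ^ 2 + h ^ 2 :=
    Real.sq_sqrt (by nlinarith [sq_nonneg (H t₁)])
  have hybound : ∀ t ∈ S₁, |y t| ≤ M := by
    intro t ht
    have hc := hcon t ht.1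
    have hρt := hρ t ht.1
    have hH1 := hHge t ht.1
    have hH2 := hanti ht₁ ht.1 ht.2
    have hV := hVsmall t ht
    rw [FriedmannConstraint] at hc
    rw [abs_le]
    constructor <;> nlinarith [sq_nonneg (y t), sq_nonneg (H t)]
  set k : ℝ := min 1 γ * h ^ 2 with hkdef
  have hm0 : 0 < min 1 γ := lt_min one_pos hγ
  have hk0 : 0 < k := mul_pos hm0 (pow_pos hh 2)
  have hkey : ∀ t ∈ S₁, -(1/2) * (y t ^ 2 + γ * ρ t) + k ≤ 0 := by
    intro t ht
    have hc := hcon t ht.1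
    rw [FriedmannConstraint] at hc
    have hρt := hρ t ht.1
    have hH1 := hHge t ht.1
    have hV := hVsmall t ht
    have hm1 : min 1 γ ≤ 1 := min_le_left _ _
    have hm2 : min 1 γ ≤ γ := min_le_right _ _
    have hHsq : h ^ 2 ≤ H t ^ 2 := by nlinarith
    have hF : (0:ℝ) ≤ min 1 γ * (y t ^ 2 + ρ t - 5/2 * h ^ 2) := by
      apply mul_nonneg hm0.le
      nlinarith [sq_nonneg (y t)]
    nlinarith [mul_nonneg (sub_nonneg.2 hm2) hρt,
      mul_nonneg (sub_nonneg.2 hm1) (sq_nonneg (y t)),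
      mul_nonneg hm0.le (sq_nonneg h)]
  have hder : ∀ t ∈ S₁,
      HasDerivWithinAt (fun s => H s + k * s) (-(1/2) * (y t ^ 2 + γ * ρ t) + k) S₁ t := by
    intro t ht
    have h1 := ((hsol t ht.1).2.2.2).mono hsub
    have h2 : HasDerivWithinAt (fun s : ℝ => k * s) k S₁ t := by
      simpa using (hasDerivWithinAt_id t S₁).const_mul k
    exact h1.add h2
  have hG : AntitoneOn (fun s => H s + k * s) S₁ :=
    antitoneOn_of_hasDerivWithinAt_nonpos hS₁
      (fun t ht => (hder t ht).continuousWithinAt)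
      (fun t ht => (hder t (interior_subset ht)).mono interior_subset)
      (fun t ht => hkey t (interior_subset ht))
  set B : ℝ := t₁ + (H t₁ - h) / k with hBdef
  have htB : ∀ t ∈ S₁, t ≤ B := by
    intro t ht
    have h1 : H t + k * t ≤ H t₁ + k * t₁ := hG ht₁S₁ ht ht.2
    have h2 := hHge t ht.1
    have h3 : (t - t₁) * k ≤ H t₁ - h := by nlinarith
    have h4 := (le_div_iff₀ hk0).2 h3
    rw [hBdef]; linarith
  have hφbound : ∀ t ∈ S₁, φ t ≤ φ t₁ + M * (B - t₁) := by
    intro t ht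
    have hlip := hS₁.norm_image_sub_le_of_norm_hasDerivWithin_le
      (f := φ) (f' := y)
      (fun s hs => ((hsol s hs.1).1).mono hsub)
      (fun s hs => by simpa [Real.norm_eq_abs] using hybound s hs) ht₁S₁ ht
    have h1 : |φ t - φ t₁| ≤ M * |t - t₁| := by
      simpa [Real.norm_eq_abs] using hlip
    have h2 : |t - t₁| = t - t₁ := abs_of_nonneg (sub_nonneg.2 ht.2)
    rw [h2] at h1
    have h3 := htB t ht
    have h4 : M * (t - t₁) ≤ M * (B - t₁) := mul_le_mul_of_nonneg_left (by linarith) hM0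
    have h5 := le_abs_self (φ t - φ t₁)
    linarith
  have hev1 := hφ.eventually_ge_atTop (φ t₁ + M * (B - t₁) + 1)
  have hev2 := hLtail t₁ ht₁
  obtain ⟨t, h1, h2, h3⟩ := (hev1.and hev2).exists
  have := hφbound t ⟨h2, h3⟩
  linarith

lemma flrw_nonpos (γ : ℝ) (hγ : 0 < γ) (α V : ℝ → ℝ) (S : Set ℝ) (hS : Convex ℝ S)
    (L : Filter ℝ) [hL : L.NeBot]
    (φ y ρ H : ℝ → ℝ)
    (hsol : IsFLRWSolution γ α V S φ y ρ H)
    (hcon : ∀ t ∈ S, FriedmannConstraint V φ y ρ H t)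
    (hρ : ∀ t ∈ S, 0 ≤ ρ t)
    (hφ : Tendsto φ L atTop)
    (hVφ : Tendsto (fun t => V (φ t)) L (nhds 0))
    (hLtail : ∀ s ∈ S, ∀ᶠ t in L, t ∈ S ∧ s ≤ t)
    (hextract : ∀ p : ℝ → Prop, (∀ᶠ t in L, p t) → ∃ t₁ ∈ S, ∀ t ∈ S, t₁ ≤ t → p t)
    (hSne : S.Nonempty)
    (Hinf : EReal) (hlim : Tendsto (fun t => (H t : EReal)) L (nhds Hinf)) :
    Hinf ≤ 0 := by
  by_contra hpos
  push_neg at hpos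
  have hne_bot : Hinf ≠ ⊥ := ne_bot_of_gt hpos
  obtain ⟨t₀, ht₀⟩ := hSne
  have hanti : AntitoneOn H S := flrw_antitoneOn γ α V hS hsol hρ hγ
  have hne_top : Hinf ≠ ⊤ := by
    have hev : ∀ᶠ s in L, (H s : EReal) ≤ (H t₀ : EReal) :=
      (hLtail t₀ ht₀).mono fun s hs => EReal.coe_le_coe_iff.2 (hanti ht₀ hs.1 hs.2)
    exact ne_top_of_le_ne_top (EReal.coe_ne_top _) (le_of_tendsto hlim hev)
  lift Hinf to ℝ using ⟨hne_top, hne_bot⟩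
  exact flrw_core γ hγ α V S hS L φ y ρ H hsol hcon hρ hφ hVφ Hinf
    (EReal.coe_pos.1 hpos) hlim hLtail hextract

lemma leftLimFilter_top : leftLimFilter ⊤ = atTop := by
  unfold leftLimFilter
  have h1 : Iio (⊤ : EReal) = {(⊤ : EReal)}ᶜ := by
    ext x; simp [lt_top_iff_ne_top]
  rw [h1]
  rw [show (nhdsWithin (⊤ : EReal) {(⊤ : EReal)}ᶜ) = 𝓝[≠] (⊤ : EReal) from rfl,
    EReal.nhdsWithin_top]
  exact Filter.comap_map EReal.coe_injective

lemma leftLimFilter_coe (b : ℝ) : leftLimFilter (b : EReal) = nhdsWithin b (Iio b) := by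
  unfold leftLimFilter
  rw [nhdsWithin, nhdsWithin, EReal.nhds_coe, Filter.comap_inf,
    Filter.comap_map EReal.coe_injective, Filter.comap_principal]
  congr 1
  ext t
  simp [EReal.coe_lt_coe_iff]

lemma IcoE_top (t₀ : ℝ) : IcoE t₀ ⊤ = Ici t₀ := by
  ext t; simp [IcoE, EReal.coe_lt_top]

lemma IcoE_coe (t₀ b : ℝ) : IcoE t₀ (b : EReal) = Ico t₀ b := by
  ext t; simp [IcoE, mem_Ico, EReal.coe_lt_coe_iff]

theorem flrw_Hinfty_nonpositive
    (γ : ℝ) (hγ : 0 < γ)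
    (α V : ℝ → ℝ) (hα : Continuous α) (hV : ContDiff ℝ 2 V)
    (t₀ : ℝ) (T : EReal) (hT : (t₀ : EReal) < T)
    (φ y ρ H : ℝ → ℝ)
    (hsol : IsFLRWSolution γ α V (IcoE t₀ T) φ y ρ H)
    (hcon : ∀ t ∈ IcoE t₀ T, FriedmannConstraint V φ y ρ H t)
    (hρ : ∀ t ∈ IcoE t₀ T, 0 ≤ ρ t)
    (hφ : Tendsto φ (leftLimFilter T) atTop)
    (hVlim : Tendsto V atTop (nhds 0)) :
    ∃ Hinf : EReal, Hinf ≤ 0 ∧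
      Tendsto (fun t => (H t : EReal)) (leftLimFilter T) (nhds Hinf) := by
  have hVφ : Tendsto (fun t => V (φ t)) (leftLimFilter T) (nhds 0) := hVlim.comp hφ
  induction T using EReal.rec with
  | bot => exact absurd hT (not_lt_bot)
  | top =>
      rw [IcoE_top] at hsol hcon hρ
      rw [leftLimFilter_top] at hφ hVφ ⊢
      have hanti : AntitoneOn H (Ici t₀) :=
        flrw_antitoneOn γ α V (convex_Ici t₀) hsol hρ hγ
      set g : ℝ → EReal := fun s => ((H (max s t₀) : ℝ) : EReal) with hgdef
      have hganti : Antitone g := by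
        intro s u hsu
        exact EReal.coe_le_coe_iff.2
          (hanti (mem_Ici.2 (le_max_right s t₀)) (mem_Ici.2 (le_max_right u t₀))
            (max_le_max hsu le_rfl))
      have hgl : Tendsto g atTop (nhds (⨅ s, g s)) := tendsto_atTop_iInf hganti
      have heq : g =ᶠ[atTop] fun t => (H t : EReal) :=
        (eventually_ge_atTop t₀).mono fun s hs => by simp [hgdef, max_eq_left hs]
      have hHlim : Tendsto (fun t => (H t : EReal)) atTop (nhds (⨅ s, g s)) :=
        hgl.congr' heq
      refine ⟨⨅ s, g s, ?_, hHlim⟩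
      have hLtail : ∀ s ∈ Ici t₀, ∀ᶠ t in (atTop : Filter ℝ), t ∈ Ici t₀ ∧ s ≤ t := by
        intro s _
        exact (eventually_ge_atTop (max t₀ s)).mono fun t ht =>
          ⟨le_trans (le_max_left _ _) ht, le_trans (le_max_right _ _) ht⟩
      have hextract : ∀ p : ℝ → Prop, (∀ᶠ t in (atTop : Filter ℝ), p t) →
          ∃ t₁ ∈ Ici t₀, ∀ t ∈ Ici t₀, t₁ ≤ t → p t := by
        intro p hp
        obtain ⟨A, hA⟩ := eventually_atTop.1 hp
        exact ⟨max A t₀, (le_max_right _ _ : t₀ ≤ max A t₀),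
          fun t _ ht => hA t (le_trans (le_max_left _ _) ht)⟩
      exact flrw_nonpos γ hγ α V (Ici t₀) (convex_Ici t₀) atTop φ y ρ H hsol hcon hρ
        hφ hVφ hLtail hextract ⟨t₀, mem_Ici.2 le_rfl⟩ _ hHlim
  | coe b =>
      have hb : t₀ < b := EReal.coe_lt_coe_iff.1 hT
      rw [IcoE_coe] at hsol hcon hρ
      rw [leftLimFilter_coe] at hφ hVφ ⊢
      have hanti : AntitoneOn H (Ico t₀ b) :=
        flrw_antitoneOn γ α V (convex_Ico t₀ b) hsol hρ hγ
      set g : ℝ → EReal := fun s => ((H (max s t₀) : ℝ) : EReal) with hgdef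
      have hganti : AntitoneOn g (Iio b) := by
        intro s hs u hu hsu
        exact EReal.coe_le_coe_iff.2
          (hanti ⟨le_max_right s t₀, max_lt hs hb⟩ ⟨le_max_right u t₀, max_lt hu hb⟩
            (max_le_max hsu le_rfl))
      have hgl : Tendsto g (nhdsWithin b (Iio b)) (nhds (sInf (g '' Iio b))) :=
        hganti.tendsto_nhdsLT (OrderBot.bddBelow _)
      have heq : g =ᶠ[nhdsWithin b (Iio b)] fun t => (H t : EReal) := by
        filter_upwards [Ioo_mem_nhdsLT hb] with t ht
        simp [hgdef, max_eq_left ht.1.le]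
      have hHlim : Tendsto (fun t => (H t : EReal)) (nhdsWithin b (Iio b))
          (nhds (sInf (g '' Iio b))) := hgl.congr' heq
      refine ⟨sInf (g '' Iio b), ?_, hHlim⟩
      have hLtail : ∀ s ∈ Ico t₀ b, ∀ᶠ t in nhdsWithin b (Iio b), t ∈ Ico t₀ b ∧ s ≤ t := by
        intro s hs
        filter_upwards [Ioo_mem_nhdsLT hs.2] with t ht
        exact ⟨⟨le_trans hs.1 ht.1.le, ht.2⟩, ht.1.le⟩
      have hextract : ∀ p : ℝ → Prop, (∀ᶠ t in nhdsWithin b (Iio b), p t) →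
          ∃ t₁ ∈ Ico t₀ b, ∀ t ∈ Ico t₀ b, t₁ ≤ t → p t := by
        intro p hp
        obtain ⟨l, hl, hsub⟩ := mem_nhdsLT_iff_exists_Ioo_subset.1 hp
        refine ⟨max t₀ ((l + b) / 2), ⟨le_max_left _ _, max_lt hb (by linarith [hl.out])⟩,
          fun t ht h1 => hsub ⟨?_, ht.2⟩⟩
        have := le_trans (le_max_right t₀ ((l + b) / 2)) h1
        linarith [hl.out]
      exact flrw_nonpos γ hγ α V (Ico t₀ b) (convex_Ico t₀ b) (nhdsWithin b (Iio b))
        φ y ρ H hsol hcon hρ hφ hVφ hLtail hextract ⟨t₀, le_rfl, hb⟩ _ hHlim
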